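/- Under the hypotheses of the largest-k-of-m proposition (independent Y_i = θ_i + Z_i, P(Z_i > c̲_i) ≤ λ̲, P(Z_i < -c̄_i) ≤ λ̄, S the index set of the k largest), the probability that at least one selected interval's upper endpoint is below its parameter satisfies P(∃ i ∈ S(Y): Y_i + c̄_i < θ_i) ≤ k·λ̄ — a Bonferroni bound with multiplicity k rather than m. -/

import Mathlib

open MeasureTheory ProbabilityTheory

lemma exists_topk {m k : ℕ} (hkm : k ≤ m) (g : Fin m → ℝ) :
    ∃ D : Finset (Fin m), D.card = k ∧ ∀ i ∈ D, ∀ j ∉ D, g j ≤ g i := by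
  induction k with
  | zero => exact ⟨∅, rfl, by simp⟩
  | succ n ih =>
    obtain ⟨D, hc, hp⟩ := ih (Nat.le_of_succ_le hkm)
    have hne : Dᶜ.Nonempty := by
      rw [← Finset.card_pos, Finset.card_compl, hc, Fintype.card_fin]
      omega
    obtain ⟨a, haD, hmax⟩ := Finset.exists_max_image Dᶜ g hne
    have haD' : a ∉ D := by simpa using haD
    refine ⟨insert a D, by rw [Finset.card_insert_of_notMem haD', hc], ?_⟩
    intro i hi j hj
    have hjD : j ∉ D := fun h => hj (Finset.mem_insert_of_mem h)
    rcases Finset.mem_insert.mp hi with rfl | hiD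
    · exact hmax j (by simpa using hjD)
    · exact hp i hiD j hjD

theorem stmt19 {Ω : Type*} [MeasurableSpace Ω] (P : Measure Ω) [IsProbabilityMeasure P]
    (m k : ℕ) (hk : 1 ≤ k) (hkm : k ≤ m)
    (Z : Fin m → Ω → ℝ) (hZmeas : ∀ i, Measurable (Z i))
    (hindep : iIndepFun Z P)
    (θ : Fin m → ℝ) (cu : Fin m → ℝ) (hcu : ∀ i, 0 < cu i)
    (lamU : ℝ) (hlamU : lamU ∈ Set.Ioo (0:ℝ) 1)
    (htailU : ∀ i, P {ω | Z i ω < -cu i} ≤ ENNReal.ofReal lamU)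
    (S : Ω → Finset (Fin m))
    (hScard : ∀ ω, (S ω).card = k)
    (hSsel : ∀ ω, ∀ i ∈ S ω, ∀ j ∉ S ω, θ j + Z j ω ≤ θ i + Z i ω) :
    P {ω | ∃ i ∈ S ω, θ i + Z i ω + cu i < θ i} ≤ k * ENNReal.ofReal lamU := by
  obtain ⟨D, hDcard, hDmax⟩ := exists_topk hkm (fun i => θ i - cu i)
  -- the event is contained in the union of bad events over D
  have hsub : {ω | ∃ i ∈ S ω, θ i + Z i ω + cu i < θ i} ⊆
      ⋃ i ∈ D, {ω | Z i ω < -cu i} := by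
    intro ω hω
    obtain ⟨i', hi'S, hbad'⟩ := hω
    have hbad : Z i' ω < -cu i' := by linarith
    by_contra hcon
    simp only [Set.mem_iUnion, Set.mem_setOf_eq, not_exists, not_lt] at hcon
    -- every i ∈ D has Z i ω ≥ -cu i
    have hi'D : i' ∉ D := fun h => absurd (hcon i' h) (not_le.mpr hbad)
    -- D ≠ S ω, so there is i ∈ D \ S ω
    have hDS : ¬ D ⊆ S ω := by
      intro hsubs
      have : D = S ω := Finset.eq_of_subset_of_card_le hsubs (by rw [hDcard, hScard])
      exact hi'D (this ▸ hi'S)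
    obtain ⟨i, hiD, hiS⟩ := Finset.not_subset.mp hDS
    have h1 : θ i + Z i ω ≤ θ i' + Z i' ω := hSsel ω i' hi'S i hiS
    have h2 : -cu i ≤ Z i ω := hcon i hiD
    have h3 : θ i' - cu i' ≤ θ i - cu i := hDmax i hiD i' hi'D
    linarith
  calc P {ω | ∃ i ∈ S ω, θ i + Z i ω + cu i < θ i}
      ≤ P (⋃ i ∈ D, {ω | Z i ω < -cu i}) := measure_mono hsub
    _ ≤ ∑ i ∈ D, P {ω | Z i ω < -cu i} := MeasureTheory.measure_biUnion_finset_le (μ := P) D _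
    _ ≤ ∑ _i ∈ D, ENNReal.ofReal lamU := Finset.sum_le_sum (fun i _ => htailU i)
    _ = k * ENNReal.ofReal lamU := by
        rw [Finset.sum_const, hDcard, nsmul_eq_mul]
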